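/- arXiv:1010.1666 — 3 statements merged into one kernel-verified Lean document; each statement's English description precedes it below -/
import Mathlib

section
/- Let (X,⟨·,·⟩) be a real inner product space with norm ‖·‖. Then for all x,y ∈ X and every integer N ≥ 1, ‖x‖^{2N} + ‖y‖^{2N} − 2(⟨x,y⟩)^N ≤ 2^{N+1}(‖x‖+‖y‖)^{2(N−1)}‖x−y‖². -/
lemma aux_pow_diff (n : ℕ) (p q C : ℝ) (hp : |p| ≤ C) (hq : |q| ≤ C) :
    |p ^ (n + 1) - q ^ (n + 1)| ≤ (n + 1) * C ^ n * |p - q| := by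
  induction n with
  | zero => simp
  | succ n ih =>
    have hC : 0 ≤ C := (abs_nonneg p).trans hp
    have key : p ^ (n + 2) - q ^ (n + 2)
        = p ^ (n + 1) * (p - q) + (p ^ (n + 1) - q ^ (n + 1)) * q := by ring
    have h1 : |p ^ (n + 1)| ≤ C ^ (n + 1) := by
      rw [abs_pow]; exact pow_le_pow_left₀ (abs_nonneg p) hp _
    calc |p ^ (n + 2) - q ^ (n + 2)|
        ≤ |p ^ (n + 1)| * |p - q| + |p ^ (n + 1) - q ^ (n + 1)| * |q| := by
          rw [key]
          refine (abs_add_le _ _).trans ?_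
          rw [abs_mul, abs_mul]
      _ ≤ C ^ (n + 1) * |p - q| + ((n + 1) * C ^ n * |p - q|) * C := by
          gcongr
      _ = (↑(n + 1) + 1) * C ^ (n + 1) * |p - q| := by push_cast; ring

lemma nsq_le (N : ℕ) (hN : 1 ≤ N) : N ^ 2 + N ≤ 2 ^ (N + 1) := by
  induction N with
  | zero => omega
  | succ n ih =>
    match n, ih with
    | 0, _ => decide
    | 1, _ => decide
    | (m + 2), ih =>
      have h := ih (by omega)
      have h2 : 2 ^ (m + 2 + 1 + 1) = 2 * 2 ^ (m + 2 + 1) := by ring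
      nlinarith

set_option maxHeartbeats 1600000 in
lemma key_real (N : ℕ) (hN : 1 ≤ N) (a b t : ℝ) (ha : 0 ≤ a) (hb : 0 ≤ b)
    (ht : |t| ≤ a * b) :
    a ^ (2 * N) + b ^ (2 * N) - 2 * t ^ N
      ≤ 2 ^ (N + 1) * (a + b) ^ (2 * (N - 1)) * (a ^ 2 + b ^ 2 - 2 * t) := by
  obtain ⟨M, rfl⟩ : ∃ M, N = M + 1 := ⟨N - 1, by omega⟩
  have habs := abs_le.mp ht
  have hab : t ≤ a * b := habs.2
  have hta : -(a * b) ≤ t := habs.1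
  have hD : 0 ≤ a ^ 2 + b ^ 2 - 2 * t := by nlinarith [sq_nonneg (a - b)]
  have hsq : (a - b) ^ 2 ≤ a ^ 2 + b ^ 2 - 2 * t := by nlinarith
  have hsnn : 0 ≤ a + b := by positivity
  have hps : 0 ≤ (a + b) ^ M := by positivity
  have hps2 : (0:ℝ) ≤ ((a + b) ^ 2) ^ M := by positivity
  -- bound 1
  have h1 : |a ^ (M + 1) - b ^ (M + 1)| ≤ (M + 1) * (a + b) ^ M * |a - b| :=
    aux_pow_diff M a b (a + b) (by rw [abs_of_nonneg ha]; linarith)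
      (by rw [abs_of_nonneg hb]; linarith)
  -- bound 2
  have habs2 : |a * b| ≤ (a + b) ^ 2 := by
    rw [abs_of_nonneg (mul_nonneg ha hb)]; nlinarith [sq_nonneg a, sq_nonneg b, mul_nonneg ha hb]
  have h2 : |(a * b) ^ (M + 1) - t ^ (M + 1)|
      ≤ (M + 1) * ((a + b) ^ 2) ^ M * |a * b - t| :=
    aux_pow_diff M (a * b) t ((a + b) ^ 2) habs2 (ht.trans (by nlinarith [sq_nonneg a, sq_nonneg b, mul_nonneg ha hb]))
  rw [abs_of_nonneg (by linarith : (0:ℝ) ≤ a * b - t)] at h2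
  have h2' : (a * b) ^ (M + 1) - t ^ (M + 1)
      ≤ (M + 1) * ((a + b) ^ 2) ^ M * (a * b - t) :=
    (le_abs_self _).trans h2
  -- square of bound 1
  have h1' : (a ^ (M + 1) - b ^ (M + 1)) ^ 2
      ≤ ((M + 1) * (a + b) ^ M) ^ 2 * (a - b) ^ 2 := by
    calc (a ^ (M + 1) - b ^ (M + 1)) ^ 2
        = |a ^ (M + 1) - b ^ (M + 1)| ^ 2 := (sq_abs _).symm
      _ ≤ ((M + 1) * (a + b) ^ M * |a - b|) ^ 2 := pow_le_pow_left₀ (abs_nonneg _) h1 2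
      _ = ((M + 1) * (a + b) ^ M) ^ 2 * (a - b) ^ 2 := by rw [mul_pow, sq_abs]
  -- key algebraic identity
  have hid : a ^ (2 * (M + 1)) + b ^ (2 * (M + 1)) - 2 * t ^ (M + 1)
      = (a ^ (M + 1) - b ^ (M + 1)) ^ 2
        + 2 * ((a * b) ^ (M + 1) - t ^ (M + 1)) := by
    have e1 : a ^ (2 * (M + 1)) = (a ^ (M + 1)) ^ 2 := by rw [mul_comm, pow_mul]
    have e2 : b ^ (2 * (M + 1)) = (b ^ (M + 1)) ^ 2 := by rw [mul_comm, pow_mul]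
    rw [e1, e2, mul_pow]
    ring
  have hexp : (2 * (M + 1 - 1)) = 2 * M := by omega
  rw [hid, hexp]
  have hs2M : ((a + b) ^ 2) ^ M = (a + b) ^ (2 * M) := by rw [← pow_mul]
  have hsM2 : ((a + b) ^ M) ^ 2 = (a + b) ^ (2 * M) := by rw [← pow_mul, Nat.mul_comm]
  have hcN : ((M:ℝ) + 1) ^ 2 + ((M:ℝ) + 1) ≤ 2 ^ (M + 1 + 1) := by
    exact_mod_cast nsq_le (M + 1) (by omega)
  have hDs : 0 ≤ (a + b) ^ (2 * M) * (a ^ 2 + b ^ 2 - 2 * t) :=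
    mul_nonneg (by positivity) hD
  calc (a ^ (M + 1) - b ^ (M + 1)) ^ 2
        + 2 * ((a * b) ^ (M + 1) - t ^ (M + 1))
      ≤ ((M + 1) * (a + b) ^ M) ^ 2 * (a - b) ^ 2
        + 2 * ((M + 1) * ((a + b) ^ 2) ^ M * (a * b - t)) := by
        gcongr
    _ ≤ ((M:ℝ) + 1) ^ 2 * ((a + b) ^ (2 * M) * (a ^ 2 + b ^ 2 - 2 * t))
        + ((M:ℝ) + 1) * ((a + b) ^ (2 * M) * (a ^ 2 + b ^ 2 - 2 * t)) := by
        rw [mul_pow, hsM2, hs2M]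
        have hA : ((a + b):ℝ) ^ (2 * M) * (a - b) ^ 2
            ≤ (a + b) ^ (2 * M) * (a ^ 2 + b ^ 2 - 2 * t) := by
          apply mul_le_mul_of_nonneg_left hsq (by positivity)
        have hB : (2:ℝ) * (a * b - t) ≤ a ^ 2 + b ^ 2 - 2 * t := by nlinarith
        nlinarith [mul_le_mul_of_nonneg_left hB
          (mul_nonneg (by positivity : (0:ℝ) ≤ (M:ℝ) + 1)
            (by positivity : (0:ℝ) ≤ (a + b) ^ (2 * M))), sq_nonneg ((M:ℝ)+1)]
    _ ≤ 2 ^ (M + 1 + 1) * (a + b) ^ (2 * M) * (a ^ 2 + b ^ 2 - 2 * t) := by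
        nlinarith [mul_le_mul_of_nonneg_right hcN hDs]

/-- For a real inner product space `X`, all `x, y ∈ X` and every integer `N ≥ 1`:
`‖x‖^{2N} + ‖y‖^{2N} − 2⟨x,y⟩^N ≤ 2^{N+1}(‖x‖+‖y‖)^{2(N−1)}‖x−y‖²`. -/
theorem stmt3 {X : Type*} [NormedAddCommGroup X] [InnerProductSpace ℝ X]
    (x y : X) (N : ℕ) (hN : 1 ≤ N) :
    ‖x‖ ^ (2 * N) + ‖y‖ ^ (2 * N) - 2 * (inner ℝ x y : ℝ) ^ N
      ≤ 2 ^ (N + 1) * (‖x‖ + ‖y‖) ^ (2 * (N - 1)) * ‖x - y‖ ^ 2 := by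
  have ht : |(inner ℝ x y : ℝ)| ≤ ‖x‖ * ‖y‖ := abs_real_inner_le_norm x y
  have hD : ‖x - y‖ ^ 2 = ‖x‖ ^ 2 + ‖y‖ ^ 2 - 2 * (inner ℝ x y : ℝ) := by
    rw [@norm_sub_sq_real]; ring
  rw [hD]
  exact key_real N hN ‖x‖ ‖y‖ _ (norm_nonneg x) (norm_nonneg y) ht
end

section
/- Let U^{k,n} solve the recursive Wick difference system U^{k,n}_l = U^{k,n}_{l−1} + k U^{k−1,n}_{l−1} ⋄ₙ (B^{H,n}_{l/n} − B^{H,n}_{(l−1)/n}), U^{0,n}_l = 1, U^{k,n}_0 = 0. Then (1/k!)U^{k,n}_l = Σ_{C⊆{1,…,l}, |C|=k} (Σ_{m:C→{1,…,l} injective} ∏_{p∈C} d^n_{m(p),p}) Ξ^n_C, where d^n_{l,i} := b^n_{l/n,i} − b^n_{(l−1)/n,i}. -/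
open Finset
open scoped Classical

/-- The discrete Wick product on Walsh coefficients:
`(x ⋄ₙ y)_C = Σ_{A∪B=C, A∩B=∅} x_A y_B`. -/
noncomputable def wickProd {n : ℕ} (x y : Finset (Fin n) → ℝ) : Finset (Fin n) → ℝ :=
  fun C => ∑ A : Finset (Fin n), ∑ B : Finset (Fin n),
    if A ∪ B = C ∧ Disjoint A B then x A * y B else 0

/-- Walsh coefficients of the increment `B^{H,n}_{l/n} − B^{H,n}_{(l−1)/n} = Σ_i d^n_{l,i} ξ_i`. -/
noncomputable def deltaC {n : ℕ} (d : ℕ → Fin n → ℝ) (l : ℕ) : Finset (Fin n) → ℝ :=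
  fun C => ∑ i : Fin n, if C = {i} then d l i else 0

/-- Walsh coefficients of the solution `U^{k,n}_l` of the recursive Wick difference system
`U^{k,n}_l = U^{k,n}_{l−1} + k U^{k−1,n}_{l−1} ⋄ₙ (B^{H,n}_{l/n} − B^{H,n}_{(l−1)/n})`,
`U^{0,n}_l = 1`, `U^{k,n}_0 = 0`.  Here `Ueuler d l k` is `U^{k,n}_l`. -/
noncomputable def Ueuler {n : ℕ} (d : ℕ → Fin n → ℝ) : ℕ → ℕ → Finset (Fin n) → ℝ
  | 0 => fun k C => if k = 0 then (if C = ∅ then 1 else 0) else 0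
  | l + 1 => fun k C =>
      match k with
      | 0 => if C = ∅ then 1 else 0
      | k + 1 =>
          Ueuler d l (k + 1) C +
            ((k : ℝ) + 1) * wickProd (Ueuler d l k) (deltaC d (l + 1)) C



variable {n : ℕ}

noncomputable def Gterm (d : ℕ → Fin n → ℝ) (C : Finset (Fin n))
    (m : (p : Fin n) → p ∈ C → ℕ) : ℝ :=
  if (∀ (p : Fin n) (hp : p ∈ C) (q : Fin n) (hq : q ∈ C), m p hp = m q hq → p = q)
  then ∏ p ∈ C.attach, d (m p.1 p.2) p.1 else 0

noncomputable def Tsum (d : ℕ → Fin n → ℝ) (l : ℕ) (C : Finset (Fin n)) : ℝ :=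
  ∑ m ∈ C.pi (fun _ => Finset.Icc 1 l), Gterm d C m

lemma Tsum_empty (d : ℕ → Fin n → ℝ) (l : ℕ) : Tsum d l (∅ : Finset (Fin n)) = 1 := by
  simp [Tsum, Gterm, Finset.pi_empty]

lemma Tsum_eq_zero (d : ℕ → Fin n → ℝ)
    (hd : ∀ (r : ℕ) (i : Fin n), r < (i : ℕ) + 1 → d r i = 0)
    {l : ℕ} {C : Finset (Fin n)} {i : Fin n} (hi : i ∈ C) (hli : l ≤ (i : ℕ)) :
    Tsum d l C = 0 := by
  refine Finset.sum_eq_zero fun m hm => ?_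
  unfold Gterm
  split
  · refine Finset.prod_eq_zero (Finset.mem_attach _ ⟨i, hi⟩) ?_
    show d (m i hi) i = 0
    apply hd
    have h := (Finset.mem_Icc.mp ((Finset.mem_pi.mp hm) i hi)).2
    omega
  · rfl

lemma ite_Tsum (d : ℕ → Fin n → ℝ)
    (hd : ∀ (r : ℕ) (i : Fin n), r < (i : ℕ) + 1 → d r i = 0)
    (l : ℕ) (C : Finset (Fin n)) :
    (if (∀ i ∈ C, (i : ℕ) < l) then Tsum d l C else 0) = Tsum d l C := by
  split_ifs with h
  · rfl
  · push_neg at h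
    obtain ⟨i, hi, hli⟩ := h
    exact (Tsum_eq_zero d hd hi (by omega)).symm


lemma Tsum_succ (d : ℕ → Fin n → ℝ) (l : ℕ) (C : Finset (Fin n)) :
    Tsum d (l + 1) C = Tsum d l C + ∑ i ∈ C, d (l + 1) i * Tsum d l (C.erase i) := by
  classical
  set big := C.pi (fun _ => Finset.Icc 1 (l + 1)) with hbig
  set P : ((p : Fin n) → p ∈ C → ℕ) → Prop := fun m => ∀ (p : Fin n) (hp : p ∈ C), m p hp ≤ l
    with hP
  have hsplit := Finset.sum_filter_add_sum_filter_not big P (Gterm d C)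
  have h1 : big.filter P = C.pi (fun _ => Finset.Icc 1 l) := by
    ext m
    simp only [Finset.mem_filter, Finset.mem_pi, Finset.mem_Icc, hbig, hP]
    constructor
    · rintro ⟨ha, hb⟩
      exact fun p hp => ⟨(ha p hp).1, hb p hp⟩
    · intro h
      exact ⟨fun p hp => ⟨(h p hp).1, le_trans (h p hp).2 (Nat.le_succ l)⟩,
        fun p hp => (h p hp).2⟩
  have h2 : ∑ m ∈ big.filter (fun m => ¬ P m), Gterm d C m
      = ∑ i ∈ C.attach, ∑ m ∈ big,
          (if (m i.1 i.2 = l + 1 ∧ ∀ (p : Fin n) (hp : p ∈ C), p ≠ i.1 → m p hp ≤ l)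
           then Gterm d C m else 0) := by
    rw [Finset.sum_filter, Finset.sum_comm]
    refine Finset.sum_congr rfl fun m hm => ?_
    have hmem : ∀ (p : Fin n) (hp : p ∈ C), m p hp ∈ Finset.Icc 1 (l + 1) :=
      Finset.mem_pi.mp hm
    by_cases hPm : P m
    · rw [if_neg (not_not_intro hPm)]
      refine (Finset.sum_eq_zero fun i _ => ?_).symm
      rw [if_neg]
      rintro ⟨he, -⟩
      have := hPm i.1 i.2
      omega
    · rw [if_pos hPm]
      have hPm2 : ¬ ∀ (p : Fin n) (hp : p ∈ C), m p hp ≤ l := hPm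
      push_neg at hPm2
      obtain ⟨p₀, hp₀, hgt⟩ := hPm2
      by_cases hG : Gterm d C m = 0
      · rw [hG]
        exact (Finset.sum_eq_zero fun i _ => by rw [ite_self]).symm
      · have hinj : ∀ (p : Fin n) (hp : p ∈ C) (q : Fin n) (hq : q ∈ C),
            m p hp = m q hq → p = q := by
          by_contra h
          exact hG (if_neg h)
        have hval : m p₀ hp₀ = l + 1 := by
          have := (Finset.mem_Icc.mp (hmem p₀ hp₀)).2
          omega
        rw [Finset.sum_eq_single (⟨p₀, hp₀⟩ : {x // x ∈ C})]
        · rw [if_pos]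
          refine ⟨hval, fun p hp hne => ?_⟩
          have h1 := (Finset.mem_Icc.mp (hmem p hp)).2
          rcases Nat.lt_or_ge (m p hp) (l + 1) with h | h
          · omega
          · exact absurd (hinj p hp p₀ hp₀ (by omega)) hne
        · intro i _ hne
          rw [if_neg]
          rintro ⟨he, -⟩
          exact hne (Subtype.ext (hinj i.1 i.2 p₀ hp₀ (by rw [he, hval])))
        · intro h
          exact absurd (Finset.mem_attach _ _) h
  have h3 : ∀ i : {x // x ∈ C},
      (∑ m ∈ big, (if (m i.1 i.2 = l + 1 ∧ ∀ (p : Fin n) (hp : p ∈ C), p ≠ i.1 → m p hp ≤ l)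
        then Gterm d C m else 0))
      = d (l + 1) i.1 * Tsum d l (C.erase i.1) := by
    intro i
    rw [← Finset.sum_filter]
    unfold Tsum
    rw [Finset.mul_sum]
    refine Finset.sum_bij'
      (i := fun m _ => fun p hp => m p (Finset.mem_of_mem_erase hp))
      (j := fun m' _ => fun p hp =>
        if h : p = i.1 then l + 1 else m' p (Finset.mem_erase.mpr ⟨h, hp⟩))
      ?_ ?_ ?_ ?_ ?_
    · intro m hm
      simp only [Finset.mem_filter] at hm
      obtain ⟨hmbig, hval, hrest⟩ := hm
      have hmem : ∀ (p : Fin n) (hp : p ∈ C), m p hp ∈ Finset.Icc 1 (l + 1) :=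
        Finset.mem_pi.mp hmbig
      refine Finset.mem_pi.mpr fun p hp => ?_
      have hpC : p ∈ C := Finset.mem_of_mem_erase hp
      have hne : p ≠ i.1 := (Finset.mem_erase.mp hp).1
      have h1 := Finset.mem_Icc.mp (hmem p hpC)
      exact Finset.mem_Icc.mpr ⟨h1.1, hrest p hpC hne⟩
    · intro m' hm'
      have hmem' : ∀ (p : Fin n) (hp : p ∈ C.erase i.1), m' p hp ∈ Finset.Icc 1 l :=
        Finset.mem_pi.mp hm'
      refine Finset.mem_filter.mpr ⟨Finset.mem_pi.mpr fun p hp => ?_, ?_, ?_⟩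
      · by_cases h : p = i.1
        · rw [dif_pos h]
          exact Finset.mem_Icc.mpr ⟨by omega, le_refl _⟩
        · rw [dif_neg h]
          have h1 := Finset.mem_Icc.mp (hmem' p (Finset.mem_erase.mpr ⟨h, hp⟩))
          exact Finset.mem_Icc.mpr ⟨h1.1, by omega⟩
      · dsimp only
        rw [dif_pos rfl]
      · intro p hp hne
        dsimp only
        rw [dif_neg hne]
        exact (Finset.mem_Icc.mp (hmem' p (Finset.mem_erase.mpr ⟨hne, hp⟩))).2
    · intro m hm
      simp only [Finset.mem_filter] at hm
      obtain ⟨hmbig, hval, hrest⟩ := hm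
      funext p hp
      dsimp only
      by_cases h : p = i.1
      · rw [dif_pos h]
        subst h
        exact hval.symm
      · rw [dif_neg h]
    · intro m' hm'
      funext p hp
      dsimp only
      rw [dif_neg (Finset.mem_erase.mp hp).1]
    · intro m hm
      simp only [Finset.mem_filter] at hm
      obtain ⟨hmbig, hval, hrest⟩ := hm
      have hmem : ∀ (p : Fin n) (hp : p ∈ C), m p hp ∈ Finset.Icc 1 (l + 1) :=
        Finset.mem_pi.mp hmbig
      unfold Gterm
      dsimp only
      by_cases hinj : ∀ (p : Fin n) (hp : p ∈ C) (q : Fin n) (hq : q ∈ C),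
          m p hp = m q hq → p = q
      · rw [if_pos hinj, if_pos (fun p hp q hq he =>
          hinj p (Finset.mem_of_mem_erase hp) q (Finset.mem_of_mem_erase hq) he)]
        set F : Fin n → ℝ := fun p => if hp : p ∈ C then d (m p hp) p else 1 with hF
        have e1 : ∏ p ∈ C.attach, d (m p.1 p.2) p.1 = ∏ p ∈ C, F p := by
          rw [← Finset.prod_attach C F]
          refine Finset.prod_congr rfl fun p _ => ?_
          rw [hF]
          dsimp only
          rw [dif_pos p.2]
        have e2 : ∏ p ∈ (C.erase i.1).attach,
            d (m p.1 (Finset.mem_of_mem_erase p.2)) p.1 = ∏ p ∈ C.erase i.1, F p := by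
          rw [← Finset.prod_attach (C.erase i.1) F]
          refine Finset.prod_congr rfl fun p _ => ?_
          rw [hF]
          dsimp only
          rw [dif_pos (Finset.mem_of_mem_erase p.2)]
        rw [e1, e2, ← Finset.mul_prod_erase C F i.2]
        congr 1
        rw [hF]
        dsimp only
        rw [dif_pos i.2, hval]
      · rw [if_neg hinj, if_neg, mul_zero]
        intro hinj'
        apply hinj
        intro p hp q hq he
        by_cases hpi : p = i.1 <;> by_cases hqi : q = i.1
        · rw [hpi, hqi]
        · exfalso
          have ha : m q hq ≤ l := hrest q hq hqi
          have hb : m p hp = l + 1 := by subst hpi; exact hval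
          omega
        · exfalso
          have ha : m p hp ≤ l := hrest p hp hpi
          have hb : m q hq = l + 1 := by subst hqi; exact hval
          omega
        · exact hinj' p (Finset.mem_erase.mpr ⟨hpi, hp⟩) q (Finset.mem_erase.mpr ⟨hqi, hq⟩) he
  calc Tsum d (l + 1) C
      = ∑ m ∈ big.filter P, Gterm d C m + ∑ m ∈ big.filter (fun m => ¬ P m), Gterm d C m :=
        hsplit.symm
    _ = Tsum d l C + ∑ i ∈ C.attach, d (l + 1) i.1 * Tsum d l (C.erase i.1) := by
        rw [h1, h2]
        refine congrArg (Tsum d l C + ·) (Finset.sum_congr rfl fun i _ => h3 i)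
    _ = Tsum d l C + ∑ i ∈ C, d (l + 1) i * Tsum d l (C.erase i) := by
        rw [Finset.sum_attach C (fun i => d (l + 1) i * Tsum d l (C.erase i))]


lemma wick_delta {n : ℕ} (x : Finset (Fin n) → ℝ) (d : ℕ → Fin n → ℝ) (r : ℕ)
    (C : Finset (Fin n)) :
    wickProd x (deltaC d r) C = ∑ i ∈ C, x (C.erase i) * d r i := by
  classical
  have key : ∀ (i : Fin n) (A : Finset (Fin n)),
      (A ∪ {i} = C ∧ Disjoint A {i}) ↔ (A = C.erase i ∧ i ∈ C) := by
    intro i A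
    constructor
    · rintro ⟨h1, h2⟩
      have hiA : i ∉ A := by simpa [Finset.disjoint_singleton_right] using h2
      have hiC : i ∈ C := by rw [← h1]; simp
      refine ⟨?_, hiC⟩
      ext j
      simp only [Finset.mem_erase]
      constructor
      · intro hj
        exact ⟨fun h => hiA (h ▸ hj), by rw [← h1]; exact Finset.mem_union_left _ hj⟩
      · rintro ⟨hne, hjC⟩
        rw [← h1] at hjC
        rcases Finset.mem_union.mp hjC with h | h
        · exact h
        · exact absurd (Finset.mem_singleton.mp h) hne
    · rintro ⟨rfl, hiC⟩
      refine ⟨?_, ?_⟩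
      · rw [Finset.union_comm, ← Finset.insert_eq, Finset.insert_erase hiC]
      · simp [Finset.disjoint_singleton_right]
  unfold wickProd deltaC
  have step1 : ∀ A B : Finset (Fin n),
      (if A ∪ B = C ∧ Disjoint A B then x A * ∑ i : Fin n, (if B = {i} then d r i else 0) else 0)
      = ∑ i : Fin n, if B = {i} then (if A ∪ B = C ∧ Disjoint A B then x A * d r i else 0) else 0 := by
    intro A B
    split_ifs with h
    · rw [Finset.mul_sum]
      refine Finset.sum_congr rfl fun i _ => ?_
      split_ifs with h2 <;> simp [h]
    · symm
      refine Finset.sum_eq_zero fun i _ => ?_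
      split_ifs with h2 <;> simp [h]
  calc (∑ A : Finset (Fin n), ∑ B : Finset (Fin n),
        if A ∪ B = C ∧ Disjoint A B then x A * ∑ i : Fin n, (if B = {i} then d r i else 0) else 0)
      = ∑ A : Finset (Fin n), ∑ B : Finset (Fin n), ∑ i : Fin n,
          if B = {i} then (if A ∪ B = C ∧ Disjoint A B then x A * d r i else 0) else 0 := by
        exact Finset.sum_congr rfl fun A _ => Finset.sum_congr rfl fun B _ => step1 A B
    _ = ∑ A : Finset (Fin n), ∑ i : Fin n, ∑ B : Finset (Fin n),
          if B = {i} then (if A ∪ B = C ∧ Disjoint A B then x A * d r i else 0) else 0 := by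
        exact Finset.sum_congr rfl fun A _ => Finset.sum_comm
    _ = ∑ A : Finset (Fin n), ∑ i : Fin n,
          (if A ∪ {i} = C ∧ Disjoint A {i} then x A * d r i else 0) := by
        refine Finset.sum_congr rfl fun A _ => Finset.sum_congr rfl fun i _ => ?_
        rw [Finset.sum_ite_eq' Finset.univ ({i} : Finset (Fin n))
          (fun B => if A ∪ B = C ∧ Disjoint A B then x A * d r i else 0), if_pos (Finset.mem_univ _)]
    _ = ∑ i : Fin n, ∑ A : Finset (Fin n),
          (if A ∪ {i} = C ∧ Disjoint A {i} then x A * d r i else 0) := Finset.sum_comm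
    _ = ∑ i : Fin n, ∑ A : Finset (Fin n),
          (if A = C.erase i then (if i ∈ C then x A * d r i else 0) else 0) := by
        refine Finset.sum_congr rfl fun i _ => Finset.sum_congr rfl fun A _ => ?_
        rw [if_congr (key i A) rfl rfl, ite_and]
    _ = ∑ i : Fin n, (if i ∈ C then x (C.erase i) * d r i else 0) := by
        refine Finset.sum_congr rfl fun i _ => ?_
        rw [Finset.sum_ite_eq' Finset.univ (C.erase i)
          (fun A => if i ∈ C then x A * d r i else 0), if_pos (Finset.mem_univ _)]
    _ = ∑ i ∈ C, x (C.erase i) * d r i := by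
        rw [Finset.sum_ite_mem, Finset.univ_inter]

lemma Ueuler_eq {n : ℕ} (d : ℕ → Fin n → ℝ)
    (hd : ∀ (r : ℕ) (i : Fin n), r < (i : ℕ) + 1 → d r i = 0) :
    ∀ (l k : ℕ) (C : Finset (Fin n)),
      Ueuler d l k C
        = (k.factorial : ℝ) *
            (if C.card = k ∧ (∀ i ∈ C, (i : ℕ) < l) then Tsum d l C else 0) := by
  intro l
  induction l with
  | zero =>
    intro k C
    show (if k = 0 then (if C = ∅ then 1 else 0) else 0) = _
    rcases k with _ | k
    · rw [if_pos rfl]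
      by_cases hC : C = ∅
      · subst hC
        rw [if_pos rfl, if_pos ⟨Finset.card_empty, fun i hi => absurd hi (Finset.notMem_empty i)⟩,
          Tsum_empty]
        simp
      · rw [if_neg hC, if_neg, mul_zero]
        rintro ⟨h, -⟩
        exact hC (Finset.card_eq_zero.mp h)
    · rw [if_neg (Nat.succ_ne_zero k), if_neg, mul_zero]
      rintro ⟨hcard, hlt⟩
      obtain ⟨i, hi⟩ := Finset.card_pos.mp (by omega : 0 < C.card)
      exact absurd (hlt i hi) (Nat.not_lt_zero _)
  | succ l ih =>
    intro k C
    match k with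
    | 0 =>
      show (if C = ∅ then 1 else 0) = _
      by_cases hC : C = ∅
      · subst hC
        rw [if_pos rfl, if_pos ⟨Finset.card_empty, fun i hi => absurd hi (Finset.notMem_empty i)⟩,
          Tsum_empty]
        simp
      · rw [if_neg hC, if_neg, mul_zero]
        rintro ⟨h, -⟩
        exact hC (Finset.card_eq_zero.mp h)
    | k + 1 =>
      show Ueuler d l (k + 1) C + ((k : ℝ) + 1) * wickProd (Ueuler d l k) (deltaC d (l + 1)) C
        = _
      rw [wick_delta, ih (k + 1) C]
      rw [Finset.sum_congr rfl (fun i (_ : i ∈ C) => by rw [ih k (C.erase i)])]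
      by_cases hcard : C.card = k + 1
      · have hers : ∀ i ∈ C, (C.erase i).card = k := fun i hi => by
          rw [Finset.card_erase_of_mem hi, hcard]
          omega
        by_cases hlt : ∀ i ∈ C, (i : ℕ) < l + 1
        · have e1 : (if C.card = k + 1 ∧ (∀ i ∈ C, (i : ℕ) < l) then Tsum d l C else 0)
              = Tsum d l C := by
            rw [if_congr (and_iff_right hcard) rfl rfl]
            exact ite_Tsum d hd l C
          rw [e1]
          rw [Finset.sum_congr rfl (fun i (hi : i ∈ C) => by
            rw [if_congr (and_iff_right (hers i hi)) rfl rfl, ite_Tsum d hd l (C.erase i)])]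
          rw [if_pos ⟨hcard, hlt⟩, Tsum_succ]
          push_cast [Nat.factorial_succ]
          rw [mul_add, Finset.mul_sum, Finset.mul_sum]
          congr 1
          exact Finset.sum_congr rfl fun i hi => by ring
        · push_neg at hlt
          obtain ⟨i₀, hi₀, hli₀⟩ := hlt
          have hA : ¬(C.card = k + 1 ∧ ∀ i ∈ C, (i : ℕ) < l) :=
            fun h => absurd (h.2 i₀ hi₀) (by omega)
          have hB : ¬(C.card = k + 1 ∧ ∀ i ∈ C, (i : ℕ) < l + 1) :=
            fun h => absurd (h.2 i₀ hi₀) (by omega)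
          have hz : ∑ i ∈ C,
              ((k.factorial : ℝ) *
                if (C.erase i).card = k ∧ ∀ j ∈ C.erase i, (j : ℕ) < l
                then Tsum d l (C.erase i) else 0) * d (l + 1) i = 0 := by
            refine Finset.sum_eq_zero fun i hi => ?_
            by_cases hii : i = i₀
            · subst hii
              rw [hd (l + 1) i (by omega), mul_zero]
            · rw [if_neg, mul_zero, zero_mul]
              rintro ⟨-, h⟩
              exact absurd (h i₀ (Finset.mem_erase.mpr ⟨fun he => hii he.symm, hi₀⟩)) (by omega)
          rw [if_neg hA, if_neg hB, hz]
          simp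
      · have hA : ¬(C.card = k + 1 ∧ ∀ i ∈ C, (i : ℕ) < l) := fun h => hcard h.1
        have hB : ¬(C.card = k + 1 ∧ ∀ i ∈ C, (i : ℕ) < l + 1) := fun h => hcard h.1
        have hz : ∑ i ∈ C,
            ((k.factorial : ℝ) *
              if (C.erase i).card = k ∧ ∀ j ∈ C.erase i, (j : ℕ) < l
              then Tsum d l (C.erase i) else 0) * d (l + 1) i = 0 := by
          refine Finset.sum_eq_zero fun i hi => ?_
          rw [if_neg, mul_zero, zero_mul]
          rintro ⟨h, -⟩
          rw [Finset.card_erase_of_mem hi] at h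
          have := Finset.card_pos.mpr ⟨i, hi⟩
          omega
        rw [if_neg hA, if_neg hB, hz]
        simp

/-- Walsh decomposition of the Euler scheme for Wick powers:
`(1/k!)U^{k,n}_l = Σ_{C ⊆ {1,…,l}, |C|=k} (Σ_{m:C→{1,…,l} injective} ∏_{p∈C} d^n_{m(p),p}) Ξ^n_C`.
Indices `i : Fin n` represent the (1-based) variable index `i+1`, so the hypothesis
`d^n_{l,i} = 0` for `i > l` reads `(i:ℕ)+1 > r → d r i = 0`. -/
theorem stmt9 {n : ℕ} (d : ℕ → Fin n → ℝ)
    (hd : ∀ (r : ℕ) (i : Fin n), r < (i : ℕ) + 1 → d r i = 0)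
    (k l : ℕ) (hl : l ≤ n) (C : Finset (Fin n)) :
    (1 / (k.factorial : ℝ)) * Ueuler d l k C
      = if C.card = k ∧ (∀ i ∈ C, (i : ℕ) < l) then
          ∑ m ∈ C.pi (fun _ => Finset.Icc 1 l),
            (if (∀ (p : Fin n) (hp : p ∈ C) (q : Fin n) (hq : q ∈ C),
                  m p hp = m q hq → p = q)
             then ∏ p ∈ C.attach, d (m p.1 p.2) p.1 else 0)
        else 0 := by
  rw [Ueuler_eq d hd l k C, one_div,
    inv_mul_cancel_left₀ (by exact_mod_cast Nat.factorial_ne_zero k : (k.factorial : ℝ) ≠ 0)]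
  rfl
end

section
/- For H ∈ (1/2,1), the Molchan–Golosov kernel coefficients satisfy b^n_{t,i} ≤ 2 c_H n^{−(1−H)} for all t ∈ [0,1] and i ∈ {1,…,⌊nt⌋}, where b^n_{t,i} = √n ∫_{(i−1)/n}^{i/n} z(⌊nt⌋/n, s) ds. -/
open MeasureTheory intervalIntegral
open scoped NNReal

/-- The Molchan–Golosov normalizing constant
`c_H = √(2HΓ(3/2−H)/(Γ(H+1/2)Γ(2−2H)))`. -/
noncomputable def cH (H : ℝ) : ℝ :=
  Real.sqrt (2 * H * Real.Gamma (3 / 2 - H) / (Real.Gamma (H + 1 / 2) * Real.Gamma (2 - 2 * H)))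

/-- The Molchan–Golosov kernel
`z(t,s) = 1_{t≥s} c_H (H−1/2) s^{1/2−H} ∫_s^t u^{H−1/2}(u−s)^{H−3/2} du`. -/
noncomputable def zMG (H t s : ℝ) : ℝ :=
  if s ≤ t then
    cH H * (H - 1 / 2) * s ^ ((1 : ℝ) / 2 - H) *
      ∫ u in s..t, u ^ (H - 1 / 2) * (u - s) ^ (H - 3 / 2)
  else 0

/-- The discretized kernel coefficient `b^n_{t,i} = √n ∫_{(i−1)/n}^{i/n} z(⌊nt⌋/n, s) ds`. -/
noncomputable def bMG (H : ℝ) (n : ℕ) (t : ℝ) (i : ℕ) : ℝ :=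
  Real.sqrt n * ∫ s in (((i : ℝ) - 1) / n)..((i : ℝ) / n), zMG H ((⌊(n : ℝ) * t⌋₊ : ℝ) / n) s

/-- Comparison of interval integrals without assuming integrability of the smaller
function: if it fails to be integrable, its integral is zero. -/
lemma integral_le_of_le_aux {f g : ℝ → ℝ} {a b : ℝ} (hab : a ≤ b)
    (hg : IntervalIntegrable g volume a b) (hg0 : ∀ x ∈ Set.Icc a b, 0 ≤ g x)
    (hfg : ∀ x ∈ Set.Icc a b, f x ≤ g x) :
    ∫ x in a..b, f x ≤ ∫ x in a..b, g x := by
  by_cases hf : IntervalIntegrable f volume a b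
  · exact intervalIntegral.integral_mono_on hab hf hg hfg
  · rw [intervalIntegral.integral_undef hf]
    exact intervalIntegral.integral_nonneg hab hg0

lemma intervalIntegrable_sub_rpow {r s a b : ℝ} (h : -1 < r) :
    IntervalIntegrable (fun u => (u - s) ^ r) volume a b := by
  have := (intervalIntegrable_rpow' (a := a - s) (b := b - s) h).comp_sub_right s
  simpa using this

lemma integral_sub_rpow {r s T : ℝ} (h : -1 < r) (hr : r ≠ -1) (hsT : s ≤ T) :
    (∫ u in s..T, (u - s) ^ r) = (T - s) ^ (r + 1) / (r + 1) := by
  have h1 : (∫ u in s..T, (u - s) ^ r) = ∫ u in (s - s)..(T - s), u ^ r :=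
    intervalIntegral.integral_comp_sub_right (fun u => u ^ r) s
  rw [h1, sub_self, integral_rpow (Or.inl h)]
  rw [Real.zero_rpow (by intro hc; apply hr; linarith)]
  ring

/-- Pointwise bound on the Molchan–Golosov kernel for `H > 1/2`:
`z(T,s) ≤ c_H s^{1/2−H}` when `0 ≤ s ≤ T ≤ 1`. -/
lemma zMG_le (H s T : ℝ) (hH : H ∈ Set.Ioo (1 / 2 : ℝ) 1) (hs : 0 ≤ s) (hsT : s ≤ T)
    (hT : T ≤ 1) : zMG H T s ≤ cH H * s ^ ((1 : ℝ) / 2 - H) := by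
  obtain ⟨hH1, hH2⟩ := hH
  have hcH : 0 ≤ cH H := Real.sqrt_nonneg _
  have hHpos : (0 : ℝ) < H - 1 / 2 := by linarith
  have hrs : s ^ ((1 : ℝ) / 2 - H) ≥ 0 := Real.rpow_nonneg hs _
  rw [zMG, if_pos hsT]
  have hexp : (-1 : ℝ) < H - 3 / 2 := by linarith
  -- bound the inner integral
  have hinner : (∫ u in s..T, u ^ (H - 1 / 2) * (u - s) ^ (H - 3 / 2))
      ≤ (T - s) ^ (H - 1 / 2) / (H - 1 / 2) := by
    have hle : (∫ u in s..T, u ^ (H - 1 / 2) * (u - s) ^ (H - 3 / 2))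
        ≤ ∫ u in s..T, (u - s) ^ (H - 3 / 2) := by
      refine integral_le_of_le_aux hsT (intervalIntegrable_sub_rpow hexp) ?_ ?_
      · intro x hx
        exact Real.rpow_nonneg (by linarith [hx.1]) _
      · intro x hx
        refine mul_le_of_le_one_left (Real.rpow_nonneg (by linarith [hx.1]) _) ?_
        exact Real.rpow_le_one (le_trans hs hx.1) (le_trans hx.2 hT) (by linarith)
    have hval : (∫ u in s..T, (u - s) ^ (H - 3 / 2)) = (T - s) ^ (H - 1 / 2) / (H - 1 / 2) := by
      have e1 : H - 3 / 2 + 1 = H - 1 / 2 := by ring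
      have := integral_sub_rpow (r := H - 3 / 2) (s := s) (T := T) hexp (by intro hc; linarith) hsT
      rw [this, e1]
    linarith [hle, hval.le, hval.ge]
  calc cH H * (H - 1 / 2) * s ^ ((1 : ℝ) / 2 - H) *
        (∫ u in s..T, u ^ (H - 1 / 2) * (u - s) ^ (H - 3 / 2))
      ≤ cH H * (H - 1 / 2) * s ^ ((1 : ℝ) / 2 - H) * ((T - s) ^ (H - 1 / 2) / (H - 1 / 2)) := by
        apply mul_le_mul_of_nonneg_left hinner
        positivity
    _ = cH H * s ^ ((1 : ℝ) / 2 - H) * (T - s) ^ (H - 1 / 2) := by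
        have h0 : H - 1 / 2 ≠ 0 := ne_of_gt hHpos
        have he : cH H * (H - 1 / 2) * s ^ ((1 : ℝ) / 2 - H) *
            ((T - s) ^ (H - 1 / 2) / (H - 1 / 2)) =
            cH H * s ^ ((1 : ℝ) / 2 - H) * (T - s) ^ (H - 1 / 2) *
              ((H - 1 / 2) / (H - 1 / 2)) := by ring
        rw [he, div_self h0, mul_one]
    _ ≤ cH H * s ^ ((1 : ℝ) / 2 - H) * 1 := by
        have h1 : (T - s) ^ (H - 1 / 2) ≤ 1 :=
          Real.rpow_le_one (by linarith) (by linarith) (by linarith)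
        have h0 : (0 : ℝ) ≤ cH H * s ^ ((1 : ℝ) / 2 - H) := by positivity
        exact mul_le_mul_of_nonneg_left h1 h0
    _ = cH H * s ^ ((1 : ℝ) / 2 - H) := by ring

lemma rpow_sub_rpow_le {x y p : ℝ} (hy : 0 ≤ y) (hxy : y ≤ x) (hp0 : 0 ≤ p) (hp1 : p ≤ 1) :
    x ^ p - y ^ p ≤ (x - y) ^ p := by
  have hx : 0 ≤ x := le_trans hy hxy
  have h := NNReal.rpow_add_le_add_rpow (x - y).toNNReal y.toNNReal hp0 hp1
  have h2 : ((x - y).toNNReal + y.toNNReal : ℝ≥0) = x.toNNReal := by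
    ext; simp [Real.toNNReal_of_nonneg (sub_nonneg.2 hxy), Real.toNNReal_of_nonneg hy,
      Real.toNNReal_of_nonneg hx]
  rw [h2] at h
  have h3 := NNReal.coe_le_coe.2 h
  push_cast at h3
  rw [Real.coe_toNNReal _ hx, Real.coe_toNNReal _ (sub_nonneg.2 hxy),
    Real.coe_toNNReal _ hy] at h3
  linarith

/-- For `H ∈ (1/2,1)`, the Molchan–Golosov kernel coefficients satisfy
`b^n_{t,i} ≤ 2 c_H n^{−(1−H)}` for all `t ∈ [0,1]` and `i ∈ {1,…,⌊nt⌋}`. -/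
theorem stmt12 (H : ℝ) (hH : H ∈ Set.Ioo (1 / 2 : ℝ) 1) (n : ℕ) (hn : 1 ≤ n)
    (t : ℝ) (ht : t ∈ Set.Icc (0 : ℝ) 1) (i : ℕ) (hi1 : 1 ≤ i) (hi2 : i ≤ ⌊(n : ℝ) * t⌋₊) :
    bMG H n t i ≤ 2 * cH H * (n : ℝ) ^ (-(1 - H)) := by
  obtain ⟨hH1, hH2⟩ := hH
  have hcH : 0 ≤ cH H := Real.sqrt_nonneg _
  have hnpos : (0 : ℝ) < n := by exact_mod_cast hn
  set m : ℕ := ⌊(n : ℝ) * t⌋₊ with hm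
  have hT1 : ((m : ℝ) / n) ≤ 1 := by
    rw [div_le_one hnpos]
    exact_mod_cast Nat.floor_le_of_le (by nlinarith [ht.1, ht.2] : (n : ℝ) * t ≤ n)
  have hi1' : (1 : ℝ) ≤ (i : ℝ) := by exact_mod_cast hi1
  have him : (i : ℝ) ≤ (m : ℝ) := by exact_mod_cast hi2
  have hab : ((i : ℝ) - 1) / n ≤ (i : ℝ) / n :=
    (div_le_div_iff_of_pos_right hnpos).2 (by linarith)
  have ha0 : 0 ≤ ((i : ℝ) - 1) / n := div_nonneg (by linarith) hnpos.le
  have hrE : (-1 : ℝ) < (1 : ℝ) / 2 - H := by linarith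
  -- bound the integral by the integral of cH * s ^ (1/2 - H)
  have hstep : (∫ s in (((i : ℝ) - 1) / n)..((i : ℝ) / n), zMG H ((m : ℝ) / n) s)
      ≤ ∫ s in (((i : ℝ) - 1) / n)..((i : ℝ) / n), cH H * s ^ ((1 : ℝ) / 2 - H) := by
    refine integral_le_of_le_aux hab ?_ ?_ ?_
    · exact ((intervalIntegrable_rpow' hrE).const_mul _)
    · intro x hx
      exact mul_nonneg hcH (Real.rpow_nonneg (le_trans ha0 hx.1) _)
    · intro x hx
      refine zMG_le H x _ ⟨hH1, hH2⟩ (le_trans ha0 hx.1) ?_ hT1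
      calc x ≤ (i : ℝ) / n := hx.2
        _ ≤ (m : ℝ) / n := (div_le_div_iff_of_pos_right hnpos).2 him
  -- compute the right-hand integral
  set a : ℝ := 3 / 2 - H with hadef
  have ha : (1 : ℝ) / 2 - H + 1 = a := by rw [hadef]; ring
  have hval : (∫ s in (((i : ℝ) - 1) / n)..((i : ℝ) / n), cH H * s ^ ((1 : ℝ) / 2 - H))
      = cH H * ((((i : ℝ) / n) ^ a - (((i : ℝ) - 1) / n) ^ a) / a) := by
    rw [intervalIntegral.integral_const_mul, integral_rpow (Or.inl hrE), ha]
  -- bound the difference of powers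
  have hdiff : (((i : ℝ) / n) ^ a - (((i : ℝ) - 1) / n) ^ a) ≤ (1 / (n : ℝ)) ^ a := by
    have := rpow_sub_rpow_le (x := (i : ℝ) / n) (y := ((i : ℝ) - 1) / n) (p := a)
      ha0 hab (by rw [hadef]; linarith) (by rw [hadef]; linarith)
    have he : (i : ℝ) / n - ((i : ℝ) - 1) / n = 1 / n := by field_simp; ring
    rwa [he] at this
  have hbound : (∫ s in (((i : ℝ) - 1) / n)..((i : ℝ) / n), zMG H ((m : ℝ) / n) s)
      ≤ cH H * ((1 / (n : ℝ)) ^ a / a) := by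
    refine hstep.trans (hval.le.trans ?_)
    exact mul_le_mul_of_nonneg_left
      ((div_le_div_iff_of_pos_right (by rw [hadef]; linarith : (0:ℝ) < a)).2 hdiff) hcH
  rw [bMG, ← hm]
  have key : Real.sqrt (n : ℝ) * ((1 / (n : ℝ)) ^ a / a) ≤ 2 * (n : ℝ) ^ (-(1 - H)) := by
    have h2 : (1 / (n : ℝ)) ^ a = (n : ℝ) ^ (-a) := by
      rw [one_div, Real.inv_rpow hnpos.le, ← Real.rpow_neg hnpos.le]
    have hs2 : Real.sqrt (n : ℝ) * ((1 / (n : ℝ)) ^ a / a)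
        = ((n : ℝ) ^ ((1 : ℝ) / 2) * (n : ℝ) ^ (-a)) * a⁻¹ := by
      rw [Real.sqrt_eq_rpow, h2]; ring
    have he : (1 : ℝ) / 2 + -a = -(1 - H) := by rw [hadef]; ring
    rw [hs2, ← Real.rpow_add hnpos, he]
    have hinv : a⁻¹ ≤ 2 := by
      rw [inv_le_comm₀ (by rw [hadef]; linarith) (by norm_num), hadef]; linarith
    calc (n : ℝ) ^ (-(1 - H)) * a⁻¹ ≤ (n : ℝ) ^ (-(1 - H)) * 2 :=
          mul_le_mul_of_nonneg_left hinv (Real.rpow_nonneg hnpos.le _)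
      _ = 2 * (n : ℝ) ^ (-(1 - H)) := by ring
  calc Real.sqrt n * ∫ s in (((i : ℝ) - 1) / n)..((i : ℝ) / n), zMG H ((m : ℝ) / n) s
      ≤ Real.sqrt n * (cH H * ((1 / (n : ℝ)) ^ a / a)) :=
        mul_le_mul_of_nonneg_left hbound (Real.sqrt_nonneg _)
    _ = cH H * (Real.sqrt (n : ℝ) * ((1 / (n : ℝ)) ^ a / a)) := by ring
    _ ≤ cH H * (2 * (n : ℝ) ^ (-(1 - H))) := mul_le_mul_of_nonneg_left key hcH
    _ = 2 * cH H * (n : ℝ) ^ (-(1 - H)) := by ring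
end
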